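/- arXiv:1706.10132 — 2 statements merged into one kernel-verified Lean document; each statement's English description precedes it below -/
import Mathlib

section
/- Let A be the adjacency matrix of a graph G on N nodes (a symmetric N×N real matrix with entries in {0,1} and zero diagonal), let Δ be the diagonal degree matrix and Q = Δ − A the Laplacian, with eigenvalues ordered 0 = μ_N ≤ μ_{N−1} ≤ … ≤ μ_1. Let c ∈ ℝ and θ ≥ 0 satisfy |c − μ_i| ≤ θ for all i with 1 ≤ i ≤ N−1. Then for any pair of Bernoulli vectors w_x, w_y ∈ {0,1}^N with w_xᵀw_y = 0, writing N_x = uᵀw_x and N_y = uᵀw_y, one has |w_xᵀ A w_y − (c/N)·N_x·N_y| ≤ (θ/N)·√(N_x(N−N_x)·N_y(N−N_y)). -/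
open Matrix


theorem parseval_aux (N : ℕ) (z : Fin N → Fin N → ℝ)
    (hz : ∀ i j, z i ⬝ᵥ z j = if i = j then (1:ℝ) else 0)
    (v w : Fin N → ℝ) :
    ∑ i, (z i ⬝ᵥ v) * (z i ⬝ᵥ w) = v ⬝ᵥ w := by
  set Z : Matrix (Fin N) (Fin N) ℝ := Matrix.of z with hZ
  have h1 : Z * Zᵀ = 1 := by
    ext i j
    simpa [hZ, Matrix.mul_apply, Matrix.one_apply, dotProduct] using hz i j
  have h2 : Zᵀ * Z = 1 := mul_eq_one_comm.mp h1
  have key : ∀ x : Fin N → ℝ, Z.mulVec x = fun i => z i ⬝ᵥ x := by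
    intro x; ext i; simp [Matrix.mulVec, dotProduct, hZ]
  calc ∑ i, (z i ⬝ᵥ v) * (z i ⬝ᵥ w) = Z.mulVec v ⬝ᵥ Z.mulVec w := by
        rw [key, key]; rfl
    _ = v ⬝ᵥ w := by
        rw [Matrix.dotProduct_mulVec, ← Matrix.mulVec_transpose,
          Matrix.mulVec_mulVec, h2, Matrix.one_mulVec]

theorem reconstruct_aux (N : ℕ) (z : Fin N → Fin N → ℝ)
    (hz : ∀ i j, z i ⬝ᵥ z j = if i = j then (1:ℝ) else 0)
    (v : Fin N → ℝ) (k : Fin N) :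
    ∑ i, (z i ⬝ᵥ v) * z i k = v k := by
  have := parseval_aux N z hz v (fun j => if j = k then 1 else 0)
  simp only [dotProduct] at this ⊢
  simp only [mul_ite, mul_one, mul_zero, Finset.sum_ite_eq',
    Finset.mem_univ, if_true] at this
  rw [← this]

/-- Isoperimetric inequality (Lemma: general isoperimetric inequality).
`A` is the adjacency matrix of a simple graph on `N` nodes, `Q = Δ - A` its
Laplacian with eigenvalues `μ 0 ≥ μ 1 ≥ … ≥ μ (N-1) = 0` (so `μ i` is `μ_{i+1}`
in 1-based notation), realized by an orthonormal eigenbasis `z`.  If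
`|c - μ_i| ≤ θ` for all eigenvalues except the last one (`μ_N = 0`), then for
any Bernoulli vectors `wx, wy` with `wxᵀ wy = 0` the stated bound holds. -/
theorem isoperimetric_inequality_general
    (N : ℕ) (hN : 0 < N)
    (A : Matrix (Fin N) (Fin N) ℝ)
    (hAsymm : A.IsSymm)
    (hA01 : ∀ i j, A i j = 0 ∨ A i j = 1)
    (hAdiag : ∀ i, A i i = 0)
    (μ : Fin N → ℝ) (z : Fin N → (Fin N → ℝ))
    (hz_orth : ∀ i j, z i ⬝ᵥ z j = if i = j then (1 : ℝ) else 0)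
    (hz_eig : ∀ i,
      (Matrix.diagonal (fun k => ∑ j, A k j) - A).mulVec (z i) = μ i • z i)
    (hμ_mono : Antitone μ)
    (hμ_last : μ ⟨N - 1, by omega⟩ = 0)
    (c θ : ℝ) (hθ0 : 0 ≤ θ)
    (hθ : ∀ i : Fin N, (i : ℕ) < N - 1 → |c - μ i| ≤ θ)
    (wx wy : Fin N → ℝ)
    (hwx : ∀ i, wx i = 0 ∨ wx i = 1)
    (hwy : ∀ i, wy i = 0 ∨ wy i = 1)
    (horth : wx ⬝ᵥ wy = 0) :
    |wx ⬝ᵥ A.mulVec wy - (c / N) * ((∑ i, wx i) * (∑ i, wy i))| ≤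
      (θ / N) * Real.sqrt ((∑ i, wx i) * (N - ∑ i, wx i) *
        ((∑ i, wy i) * (N - ∑ i, wy i))) := by
  have hNne : (N : ℝ) ≠ 0 := Nat.cast_ne_zero.mpr hN.ne'
  set Q : Matrix (Fin N) (Fin N) ℝ :=
    Matrix.diagonal (fun k => ∑ j, A k j) - A with hQdef
  set u : Fin N → ℝ := fun _ => (1:ℝ) with hu
  set a : Fin N → ℝ := fun i => z i ⬝ᵥ wx with ha
  set b : Fin N → ℝ := fun i => z i ⬝ᵥ wy with hb
  set s : Fin N → ℝ := fun i => z i ⬝ᵥ u with hs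
  set Nx : ℝ := ∑ i, wx i with hNx
  set Ny : ℝ := ∑ i, wy i with hNy
  have hQsymm : Qᵀ = Q := by
    rw [hQdef, Matrix.transpose_sub, Matrix.diagonal_transpose, hAsymm]
  -- Q annihilates the all-ones vector
  have hQu : Q.mulVec u = 0 := by
    funext k
    simp [hQdef, Matrix.sub_mulVec, Matrix.mulVec_diagonal, hu, Matrix.mulVec,
      dotProduct, Matrix.diagonal_apply, Finset.sum_ite_eq]
  have hμs : ∀ i, μ i * s i = 0 := by
    intro i
    have h0 : z i ⬝ᵥ Q.mulVec u = 0 := by rw [hQu]; simp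
    rw [Matrix.dotProduct_mulVec, ← Matrix.mulVec_transpose, hQsymm, hz_eig i,
      smul_dotProduct] at h0
    simpa [hs, smul_eq_mul] using h0
  -- quadratic form of Q in the eigenbasis
  have hzQ : ∀ i, z i ⬝ᵥ Q.mulVec wy = μ i * b i := by
    intro i
    rw [Matrix.dotProduct_mulVec, ← Matrix.mulVec_transpose, hQsymm, hz_eig i,
      smul_dotProduct]
    simp [hb, smul_eq_mul]
  have hQform : wx ⬝ᵥ Q.mulVec wy = ∑ i, μ i * (a i * b i) := by
    have : wx ⬝ᵥ Q.mulVec wy = ∑ k, (∑ i, a i * z i k) * (Q.mulVec wy) k := by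
      refine Finset.sum_congr rfl fun k _ => ?_
      rw [reconstruct_aux N z hz_orth wx k]
    rw [dotProduct] at this ⊢
    rw [this]
    simp_rw [Finset.sum_mul]
    rw [Finset.sum_comm]
    refine Finset.sum_congr rfl fun i _ => ?_
    have : ∑ k, a i * z i k * (Q.mulVec wy) k = a i * (z i ⬝ᵥ Q.mulVec wy) := by
      rw [dotProduct, Finset.mul_sum]; exact Finset.sum_congr rfl fun k _ => by ring
    rw [this, hzQ i]; ring
  -- disjoint supports
  have hxy0 : ∀ k, wx k * wy k = 0 := by
    intro k
    have hnn : ∀ j ∈ Finset.univ, (0:ℝ) ≤ wx j * wy j := by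
      intro j _
      rcases hwx j with h | h <;> rcases hwy j with h' | h' <;> simp [h, h']
    exact (Finset.sum_eq_zero_iff_of_nonneg hnn).mp horth k (Finset.mem_univ k)
  -- A-form equals minus Q-form
  have hAform : wx ⬝ᵥ A.mulVec wy = -∑ i, μ i * (a i * b i) := by
    have hAQ : A = Matrix.diagonal (fun k => ∑ j, A k j) - Q := by
      rw [hQdef, sub_sub_cancel]
    have hdiag : wx ⬝ᵥ (Matrix.diagonal (fun k => ∑ j, A k j)).mulVec wy = 0 := by
      rw [dotProduct]
      refine Finset.sum_eq_zero fun k _ => ?_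
      rw [Matrix.mulVec_diagonal]
      linear_combination (∑ j, A k j) * hxy0 k
    rw [hAQ, Matrix.sub_mulVec, dotProduct_sub, hdiag, hQform]; ring
  -- Parseval instances
  have hs2 : ∑ i, s i * s i = N := by
    have := parseval_aux N z hz_orth u u
    simpa [hs, hu, dotProduct] using this
  have hsa : ∑ i, s i * a i = Nx := by
    have := parseval_aux N z hz_orth u wx
    simpa [hs, ha, hNx, hu, dotProduct] using this
  have hsb : ∑ i, s i * b i = Ny := by
    have := parseval_aux N z hz_orth u wy
    simpa [hs, hb, hNy, hu, dotProduct] using this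
  have hab : ∑ i, a i * b i = 0 := by
    have := parseval_aux N z hz_orth wx wy
    simpa [ha, hb, horth] using this
  have ha2 : ∑ i, a i * a i = Nx := by
    have := parseval_aux N z hz_orth wx wx
    rw [this, dotProduct, hNx]
    refine Finset.sum_congr rfl fun k _ => ?_
    rcases hwx k with h | h <;> simp [h]
  have hb2 : ∑ i, b i * b i = Ny := by
    have := parseval_aux N z hz_orth wy wy
    rw [this, dotProduct, hNy]
    refine Finset.sum_congr rfl fun k _ => ?_
    rcases hwy k with h | h <;> simp [h]
  -- centered coefficients
  set ah : Fin N → ℝ := fun i => a i - (Nx / N) * s i with hah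
  set bh : Fin N → ℝ := fun i => b i - (Ny / N) * s i with hbh
  -- main identity
  have hT : wx ⬝ᵥ A.mulVec wy - (c / N) * (Nx * Ny)
      = ∑ i, (c - μ i) * (ah i * bh i) := by
    have expand : ∀ i, (c - μ i) * (ah i * bh i)
        = c * (a i * b i) - μ i * (a i * b i) - (Ny / N) * c * (s i * a i)
          - (Nx / N) * c * (s i * b i)
          + (Nx / N) * (Ny / N) * c * (s i * s i) := by
      intro i
      have h := hμs i
      simp only [hah, hbh]
      linear_combination ((Ny/N)*(a i) + (Nx/N)*(b i) - (Nx/N)*(Ny/N)*(s i)) * h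
    have hsum : ∑ i, (c - μ i) * (ah i * bh i)
        = c * (∑ i, a i * b i) - (∑ i, μ i * (a i * b i))
          - (Ny / N) * c * (∑ i, s i * a i) - (Nx / N) * c * (∑ i, s i * b i)
          + (Nx / N) * (Ny / N) * c * (∑ i, s i * s i) := by
      simp only [Finset.mul_sum, ← Finset.sum_sub_distrib, ← Finset.sum_add_distrib]
      exact Finset.sum_congr rfl fun i _ => expand i
    rw [hsum, hab, hsa, hsb, hs2, hAform]
    field_simp
    ring
  -- sums of squares of centered coefficients
  have hah2 : ∑ i, ah i * ah i = Nx * ((N : ℝ) - Nx) / N := by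
    have expand : ∀ i, ah i * ah i
        = a i * a i - 2 * (Nx / N) * (s i * a i) + (Nx/N) * (Nx/N) * (s i * s i) := by
      intro i; simp only [hah]; ring
    have hsum : ∑ i, ah i * ah i
        = (∑ i, a i * a i) - 2 * (Nx / N) * (∑ i, s i * a i)
          + (Nx / N) * (Nx / N) * (∑ i, s i * s i) := by
      simp only [Finset.mul_sum, ← Finset.sum_sub_distrib, ← Finset.sum_add_distrib]
      exact Finset.sum_congr rfl fun i _ => expand i
    rw [hsum, ha2, hsa, hs2]
    field_simp; ring
  have hbh2 : ∑ i, bh i * bh i = Ny * ((N : ℝ) - Ny) / N := by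
    have expand : ∀ i, bh i * bh i
        = b i * b i - 2 * (Ny / N) * (s i * b i) + (Ny/N) * (Ny/N) * (s i * s i) := by
      intro i; simp only [hbh]; ring
    have hsum : ∑ i, bh i * bh i
        = (∑ i, b i * b i) - 2 * (Ny / N) * (∑ i, s i * b i)
          + (Ny / N) * (Ny / N) * (∑ i, s i * s i) := by
      simp only [Finset.mul_sum, ← Finset.sum_sub_distrib, ← Finset.sum_add_distrib]
      exact Finset.sum_congr rfl fun i _ => expand i
    rw [hsum, hb2, hsb, hs2]
    field_simp; ring
  -- pointwise bound
  have hbound : ∀ i, |(c - μ i) * (ah i * bh i)| ≤ θ * (|ah i| * |bh i|) := by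
    intro i
    rw [abs_mul, abs_mul]
    by_cases hi : (i : ℕ) < N - 1
    · exact mul_le_mul_of_nonneg_right (hθ i hi)
        (mul_nonneg (abs_nonneg _) (abs_nonneg _))
    · -- i is the last index
      have hieq : i = ⟨N - 1, by omega⟩ := by
        apply Fin.ext; have := i.isLt; simp; omega
      have hμi : μ i = 0 := by rw [hieq]; exact hμ_last
      by_cases hex : ∃ j : Fin N, (j : ℕ) < N - 1 ∧ μ j = 0
      · obtain ⟨j, hj1, hj2⟩ := hex
        have : |c - μ i| ≤ θ := by
          rw [hμi, sub_zero]
          have := hθ j hj1; rw [hj2, sub_zero] at this; exact this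
        exact mul_le_mul_of_nonneg_right this
          (mul_nonneg (abs_nonneg _) (abs_nonneg _))
      · push_neg at hex
        have hszero : ∀ j : Fin N, j ≠ i → s j = 0 := by
          intro j hj
          have hjlt : (j : ℕ) < N - 1 := by
            have := j.isLt
            have : (j : ℕ) ≠ N - 1 := fun h => hj (by rw [hieq]; exact Fin.ext h)
            omega
          have hμj := hex j hjlt
          have := hμs j
          rcases mul_eq_zero.mp this with h | h
          · exact absurd h hμj
          · exact h
        have hsi2 : s i * s i = N := by
          have h1 : ∑ j, s j * s j = s i * s i :=
            Finset.sum_eq_single_of_mem i (Finset.mem_univ i)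
              (fun j _ hj => by rw [hszero j hj]; ring)
          rw [← h1, hs2]
        have hsai : s i * a i = Nx := by
          have h1 : ∑ j, s j * a j = s i * a i :=
            Finset.sum_eq_single_of_mem i (Finset.mem_univ i)
              (fun j _ hj => by rw [hszero j hj]; ring)
          rw [← h1, hsa]
        have hahi : ah i = 0 := by
          simp only [hah]
          rw [← hsai]
          field_simp
          linear_combination (-(a i)) * hsi2
        rw [hahi]
        simp [hθ0]
  -- assemble
  rw [hT]
  calc |∑ i, (c - μ i) * (ah i * bh i)|
      ≤ ∑ i, |(c - μ i) * (ah i * bh i)| := Finset.abs_sum_le_sum_abs _ _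
    _ ≤ ∑ i, θ * (|ah i| * |bh i|) :=
        Finset.sum_le_sum fun i _ => hbound i
    _ = θ * ∑ i, |ah i| * |bh i| := by rw [Finset.mul_sum]
    _ ≤ θ * Real.sqrt ((∑ i, ah i * ah i) * (∑ i, bh i * bh i)) := by
        refine mul_le_mul_of_nonneg_left ?_ hθ0
        have hcs := Finset.sum_mul_sq_le_sq_mul_sq Finset.univ
          (fun i => |ah i|) (fun i => |bh i|)
        have h1 : (0:ℝ) ≤ ∑ i, |ah i| * |bh i| :=
          Finset.sum_nonneg fun i _ => mul_nonneg (abs_nonneg _) (abs_nonneg _)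
        have h2 : (∑ i, |ah i| ^ 2) = ∑ i, ah i * ah i := by
          refine Finset.sum_congr rfl fun i _ => by rw [sq_abs]; ring
        have h3 : (∑ i, |bh i| ^ 2) = ∑ i, bh i * bh i := by
          refine Finset.sum_congr rfl fun i _ => by rw [sq_abs]; ring
        rw [h2, h3] at hcs
        have := Real.sqrt_le_sqrt hcs
        rwa [Real.sqrt_sq h1] at this
    _ ≤ (θ / N) * Real.sqrt (Nx * ((N:ℝ) - Nx) * (Ny * ((N:ℝ) - Ny))) := by
        rw [hah2, hbh2]
        have hPnn : (0:ℝ) ≤ Nx * ((N:ℝ) - Nx) / N := by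
          rw [← hah2]; exact Finset.sum_nonneg fun i _ => mul_self_nonneg _
        have hQnn : (0:ℝ) ≤ Ny * ((N:ℝ) - Ny) / N := by
          rw [← hbh2]; exact Finset.sum_nonneg fun i _ => mul_self_nonneg _
        have key : Nx * ((N:ℝ) - Nx) / N * (Ny * ((N:ℝ) - Ny) / N)
            = Nx * ((N:ℝ) - Nx) * (Ny * ((N:ℝ) - Ny)) / (N * N) := by
          field_simp
        have hNpos : (0:ℝ) < N := by exact_mod_cast hN
        have hP : (0:ℝ) ≤ Nx * ((N:ℝ) - Nx) := by
          have h := mul_nonneg hPnn hNpos.le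
          rwa [div_mul_cancel₀ _ hNne] at h
        have hQ' : (0:ℝ) ≤ Ny * ((N:ℝ) - Ny) := by
          have h := mul_nonneg hQnn hNpos.le
          rwa [div_mul_cancel₀ _ hNne] at h
        rw [key, Real.sqrt_div (mul_nonneg hP hQ'),
          Real.sqrt_mul_self hNpos.le]
        apply le_of_eq
        ring
end

section
/- Let G be a bi-regular bipartite graph on N = N_k + N_m nodes with parts V_k (of size N_k) and V_m (of size N_m), L links, and adjacency matrix A = [[0, B],[Bᵀ, 0]] where B is an N_k×N_m matrix with entries in {0,1} satisfying Bu = (L/N_k)u and uᵀB = (L/N_m)uᵀ. Let λ_1 ≥ λ_2 ≥ … ≥ λ_N denote the eigenvalues of A. Then for any subsets X ⊆ V_k of size N_x and Y ⊆ V_m of size N_y, the number m of links between X and Y satisfies: (m − (L/(N_k·N_m))·N_x·N_y)² ≤ λ_2²·(N_x(N_k − N_x)·N_y(N_m − N_y))/(N_k·N_m). -/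
open Matrix



section Aux
variable {n : ℕ} {ι : Type*} [Fintype ι] [DecidableEq ι]

lemma complete_rel (hcard : Fintype.card ι = n) (z : Fin n → ι → ℝ)
    (hz : ∀ i j, z i ⬝ᵥ z j = if i = j then (1:ℝ) else 0) (a b : ι) :
    (∑ i, z i a * z i b) = if a = b then (1:ℝ) else 0 := by
  classical
  let e : ι ≃ Fin n := Fintype.equivFinOfCardEq hcard
  let M : Matrix (Fin n) (Fin n) ℝ := fun i j => z i (e.symm j)
  have h1 : M * Mᵀ = 1 := by
    ext i j
    have : (M * Mᵀ) i j = ∑ k, z i (e.symm k) * z j (e.symm k) := by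
      rw [Matrix.mul_apply]; rfl
    rw [this]
    have h2 : ∑ k, z i (e.symm k) * z j (e.symm k) = ∑ a, z i a * z j a :=
      Fintype.sum_equiv e.symm _ _ (fun k => rfl)
    rw [h2]
    have := hz i j
    simpa [dotProduct, Matrix.one_apply] using this
  have h2 : Mᵀ * M = 1 := mul_eq_one_comm.mp h1
  have h3 := congrFun (congrFun h2 (e a)) (e b)
  have h4 : (Mᵀ * M) (e a) (e b) = ∑ i, z i a * z i b := by
    rw [Matrix.mul_apply]; simp only [Matrix.transpose_apply]; simp [M]
  rw [h4] at h3
  rw [h3]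
  simp [Matrix.one_apply]

lemma parseval (hcard : Fintype.card ι = n) (z : Fin n → ι → ℝ)
    (hz : ∀ i j, z i ⬝ᵥ z j = if i = j then (1:ℝ) else 0) (v u : ι → ℝ) :
    v ⬝ᵥ u = ∑ i, (v ⬝ᵥ z i) * (u ⬝ᵥ z i) := by
  calc v ⬝ᵥ u = ∑ a, ∑ b, v a * u b * (if a = b then (1:ℝ) else 0) := by
        simp [dotProduct, mul_ite, Finset.sum_ite_eq]
    _ = ∑ a, ∑ b, v a * u b * (∑ i, z i a * z i b) := by
        simp_rw [complete_rel hcard z hz]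
    _ = ∑ a, ∑ i, ∑ b, v a * z i a * (u b * z i b) := by
        apply Finset.sum_congr rfl; intro a _
        rw [Finset.sum_comm]
        apply Finset.sum_congr rfl; intro i _
        rw [Finset.mul_sum]; apply Finset.sum_congr rfl; intro b _; ring
    _ = ∑ i, ∑ a, ∑ b, v a * z i a * (u b * z i b) := Finset.sum_comm
    _ = ∑ i, (v ⬝ᵥ z i) * (u ⬝ᵥ z i) := by
        apply Finset.sum_congr rfl; intro i _
        rw [dotProduct, dotProduct, Finset.sum_mul_sum]


lemma spectral_bound (hcard : Fintype.card ι = n) (hn : 1 < n)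
    (A : Matrix ι ι ℝ) (hAsym : Aᵀ = A)
    (lam : Fin n → ℝ) (z : Fin n → ι → ℝ)
    (hz : ∀ i j, z i ⬝ᵥ z j = if i = j then (1:ℝ) else 0)
    (heig : ∀ i, A *ᵥ z i = lam i • z i)
    (hmono : Antitone lam)
    (p : ι → ℝ) (μ : ℝ) (hp : A *ᵥ p = μ • p)
    (hμ : lam ⟨0, by omega⟩ ≤ μ) (hpne : p ⬝ᵥ p ≠ 0)
    (w : ι → ℝ) (hwp : p ⬝ᵥ w = 0) :
    w ⬝ᵥ (A *ᵥ w) ≤ lam ⟨1, hn⟩ * (w ⬝ᵥ w) := by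
  classical
  set i0 : Fin n := ⟨0, by omega⟩ with hi0
  set i1 : Fin n := ⟨1, hn⟩ with hi1
  have hA' : ∀ a b : ι, A b a = A a b := by
    intro a b
    have := congrFun (congrFun hAsym a) b
    simpa [Matrix.transpose_apply] using this
  have hsymm : ∀ (v u : ι → ℝ), (A *ᵥ v) ⬝ᵥ u = v ⬝ᵥ (A *ᵥ u) := by
    intro v u
    calc (A *ᵥ v) ⬝ᵥ u = ∑ a, ∑ b, A a b * v b * u a := by
          simp only [dotProduct, Matrix.mulVec, Finset.sum_mul]
      _ = ∑ b, ∑ a, A a b * v b * u a := Finset.sum_comm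
      _ = v ⬝ᵥ (A *ᵥ u) := by
          simp only [dotProduct, Matrix.mulVec, Finset.mul_sum]
          apply Finset.sum_congr rfl; intro b _
          apply Finset.sum_congr rfl; intro a _
          rw [hA' b a]; ring
  have hquad : w ⬝ᵥ (A *ᵥ w) = ∑ i, lam i * (w ⬝ᵥ z i) ^ 2 := by
    rw [parseval hcard z hz w (A *ᵥ w)]
    apply Finset.sum_congr rfl
    intro i _
    rw [hsymm w (z i), heig i, dotProduct_smul, smul_eq_mul]
    ring
  have hdrel : ∀ i, lam i * (p ⬝ᵥ z i) = μ * (p ⬝ᵥ z i) := by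
    intro i
    have h1 : (A *ᵥ p) ⬝ᵥ z i = μ * (p ⬝ᵥ z i) := by
      rw [hp, smul_dotProduct, smul_eq_mul]
    have h2 : (A *ᵥ p) ⬝ᵥ z i = lam i * (p ⬝ᵥ z i) := by
      rw [hsymm p (z i), heig i, dotProduct_smul, smul_eq_mul]
    rw [← h2, h1]
  have hww : w ⬝ᵥ w = ∑ i, (w ⬝ᵥ z i) ^ 2 := by
    rw [parseval hcard z hz w w]; apply Finset.sum_congr rfl; intro i _; ring
  have hpt : ∀ i : Fin n, lam i * (w ⬝ᵥ z i) ^ 2 ≤ lam i1 * (w ⬝ᵥ z i) ^ 2 := by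
    by_cases hcase : lam i0 ≤ lam i1
    · intro i
      have : lam i ≤ lam i1 := by
        rcases Nat.eq_zero_or_pos i.val with h | h
        · have hi : i = i0 := Fin.ext (by simpa using h)
          rw [hi]; exact hcase
        · exact hmono (show i1 ≤ i from by rw [Fin.le_def]; exact h)
      nlinarith [sq_nonneg (w ⬝ᵥ z i)]
    · push_neg at hcase
      have hd0 : ∀ i : Fin n, i ≠ i0 → p ⬝ᵥ z i = 0 := by
        intro i hi
        by_contra hdi
        have hlam : lam i = μ := by
          have h := hdrel i
          have h' : (lam i - μ) * (p ⬝ᵥ z i) = 0 := by linarith [h]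
          rcases mul_eq_zero.mp h' with h'' | h''
          · linarith
          · exact absurd h'' hdi
        have h1le : (1 : ℕ) ≤ i.val := by
          rcases Nat.eq_zero_or_pos i.val with h | h
          · exact absurd (Fin.ext (by simpa using h)) hi
          · exact h
        have hle : lam i ≤ lam i1 :=
          hmono (show i1 ≤ i from by rw [Fin.le_def]; exact h1le)
        have h0 : lam i0 ≤ μ := hμ
        linarith
      have hc0 : w ⬝ᵥ z i0 = 0 := by
        have hexp : p ⬝ᵥ w = ∑ i, (p ⬝ᵥ z i) * (w ⬝ᵥ z i) := parseval hcard z hz p w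
        have hsum : ∑ i, (p ⬝ᵥ z i) * (w ⬝ᵥ z i) = (p ⬝ᵥ z i0) * (w ⬝ᵥ z i0) :=
          Finset.sum_eq_single i0 (fun i _ hi => by rw [hd0 i hi]; ring)
            (fun h => absurd (Finset.mem_univ i0) h)
        have hpp : p ⬝ᵥ p = (p ⬝ᵥ z i0) * (p ⬝ᵥ z i0) := by
          rw [parseval hcard z hz p p]
          exact Finset.sum_eq_single i0 (fun i _ hi => by rw [hd0 i hi]; ring)
            (fun h => absurd (Finset.mem_univ i0) h)
        have hdne : p ⬝ᵥ z i0 ≠ 0 := by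
          intro h; apply hpne; rw [hpp, h]; ring
        have hz0 : (p ⬝ᵥ z i0) * (w ⬝ᵥ z i0) = 0 := by rw [← hsum, ← hexp, hwp]
        exact (mul_eq_zero.mp hz0).resolve_left hdne
      intro i
      rcases Nat.eq_zero_or_pos i.val with h | h
      · have hi : i = i0 := Fin.ext (by simpa using h)
        rw [hi, hc0]; simp
      · have : lam i ≤ lam i1 :=
          hmono (show i1 ≤ i from by rw [Fin.le_def]; exact h)
        nlinarith [sq_nonneg (w ⬝ᵥ z i)]
  rw [hquad, hww, Finset.mul_sum]
  exact Finset.sum_le_sum (fun i _ => hpt i)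

end Aux


set_option maxHeartbeats 1000000 in
/-- Isoperimetric inequality for bi-regular bipartite graphs.  The graph has
parts of sizes `Nk`, `Nm`, `L` links, and adjacency matrix
`A = [[0, B], [Bᵀ, 0]]` where every row sum of `B` is `L/Nk` and every column
sum is `L/Nm`.  The eigenvalues of `A` are `lam 0 ≥ lam 1 ≥ …` (so `lam 1` is
`λ₂`), realized by an orthonormal eigenbasis `z`.  For subsets `X ⊆ V_k`,
`Y ⊆ V_m`, the number `m` of links between `X` and `Y` satisfies the stated
bound. -/
theorem isoperimetric_inequality_biregular
    (Nk Nm : ℕ) (hNk : 0 < Nk) (hNm : 0 < Nm)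
    (L : ℝ)
    (B : Matrix (Fin Nk) (Fin Nm) ℝ)
    (hB01 : ∀ i j, B i j = 0 ∨ B i j = 1)
    (hBrow : B.mulVec (fun _ => 1) = fun _ => L / Nk)
    (hBcol : Matrix.vecMul (fun _ => 1) B = fun _ => L / Nm)
    (A : Matrix (Fin Nk ⊕ Fin Nm) (Fin Nk ⊕ Fin Nm) ℝ)
    (hA : A = Matrix.fromBlocks 0 B Bᵀ 0)
    (lam : Fin (Nk + Nm) → ℝ)
    (z : Fin (Nk + Nm) → (Fin Nk ⊕ Fin Nm → ℝ))
    (hz_orth : ∀ i j, z i ⬝ᵥ z j = if i = j then (1 : ℝ) else 0)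
    (hz_eig : ∀ i, A.mulVec (z i) = lam i • z i)
    (hlam_mono : Antitone lam)
    (X : Finset (Fin Nk)) (Y : Finset (Fin Nm))
    (Nx Ny : ℝ) (hNx : Nx = X.card) (hNy : Ny = Y.card)
    (m : ℝ) (hm : m = ∑ i ∈ X, ∑ j ∈ Y, B i j) :
    (m - (L / (Nk * Nm)) * Nx * Ny) ^ 2 ≤
      (lam ⟨1, by omega⟩) ^ 2 *
        (Nx * (Nk - Nx) * (Ny * (Nm - Ny))) / (Nk * Nm) := by
  classical
  have hn : 1 < Nk + Nm := by omega
  set lam1 : ℝ := lam ⟨1, hn⟩ with hlam1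
  have hNkR : (0:ℝ) < Nk := by exact_mod_cast hNk
  have hNmR : (0:ℝ) < Nm := by exact_mod_cast hNm
  have hrow : ∀ i, ∑ j, B i j = L / Nk := by
    intro i
    have h := congrFun hBrow i
    simpa [Matrix.mulVec, dotProduct] using h
  have hcol : ∀ j, ∑ i, B i j = L / Nm := by
    intro j
    have h := congrFun hBcol j
    simpa [Matrix.vecMul, dotProduct] using h
  have hBnn : ∀ i j, 0 ≤ B i j := by
    intro i j; rcases hB01 i j with h | h <;> rw [h] <;> norm_num
  have hL0 : 0 ≤ L := by
    have h := hrow ⟨0, hNk⟩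
    have hs : 0 ≤ ∑ j, B ⟨0, hNk⟩ j := Finset.sum_nonneg fun j _ => hBnn _ j
    rw [h] at hs
    have := mul_nonneg hs hNkR.le
    rwa [div_mul_cancel₀ _ (ne_of_gt hNkR)] at this
  -- deviation vectors
  set x : Fin Nk → ℝ := fun i => (if i ∈ X then (1:ℝ) else 0) - Nx / Nk with hxdef
  set y : Fin Nm → ℝ := fun j => (if j ∈ Y then (1:ℝ) else 0) - Ny / Nm with hydef
  have hxsum : ∑ i, x i = 0 := by
    simp only [hxdef, Finset.sum_sub_distrib, Finset.sum_ite_mem, Finset.univ_inter,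
      Finset.sum_const, nsmul_eq_mul, mul_one, Finset.card_univ, Fintype.card_fin]
    rw [← hNx]
    field_simp
    ring
  have hysum : ∑ j, y j = 0 := by
    simp only [hydef, Finset.sum_sub_distrib, Finset.sum_ite_mem, Finset.univ_inter,
      Finset.sum_const, nsmul_eq_mul, mul_one, Finset.card_univ, Fintype.card_fin]
    rw [← hNy]
    field_simp
    ring
  set SX : ℝ := ∑ i, x i ^ 2 with hSXdef
  set SY : ℝ := ∑ j, y j ^ 2 with hSYdef
  have hSXnn : 0 ≤ SX := Finset.sum_nonneg fun i _ => sq_nonneg _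
  have hSYnn : 0 ≤ SY := Finset.sum_nonneg fun j _ => sq_nonneg _
  have hSX : SX = Nx * (Nk - Nx) / Nk := by
    have hpt : ∀ i, x i ^ 2 =
        (1 - 2*(Nx/Nk)) * (if i ∈ X then (1:ℝ) else 0) + (Nx/Nk)^2 := by
      intro i; by_cases h : i ∈ X <;> simp [hxdef, h] <;> ring
    rw [hSXdef]
    simp only [hpt, Finset.sum_add_distrib, ← Finset.mul_sum, Finset.sum_ite_mem,
      Finset.univ_inter, Finset.sum_const, nsmul_eq_mul, mul_one, Finset.card_univ,
      Fintype.card_fin]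
    rw [← hNx]
    field_simp
    ring
  have hSY : SY = Ny * (Nm - Ny) / Nm := by
    have hpt : ∀ j, y j ^ 2 =
        (1 - 2*(Ny/Nm)) * (if j ∈ Y then (1:ℝ) else 0) + (Ny/Nm)^2 := by
      intro j; by_cases h : j ∈ Y <;> simp [hydef, h] <;> ring
    rw [hSYdef]
    simp only [hpt, Finset.sum_add_distrib, ← Finset.mul_sum, Finset.sum_ite_mem,
      Finset.univ_inter, Finset.sum_const, nsmul_eq_mul, mul_one, Finset.card_univ,
      Fintype.card_fin]
    rw [← hNy]
    field_simp
    ring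
  set Q : ℝ := ∑ i, ∑ j, x i * B i j * y j with hQdef
  have hQ : Q = m - L / (Nk * Nm) * Nx * Ny := by
    have hpt : ∀ i j, x i * B i j * y j =
        (if i ∈ X then (1:ℝ) else 0) * B i j * (if j ∈ Y then (1:ℝ) else 0)
        - (Nx/Nk) * (B i j * (if j ∈ Y then (1:ℝ) else 0))
        - (Ny/Nm) * ((if i ∈ X then (1:ℝ) else 0) * B i j)
        + (Nx/Nk) * (Ny/Nm) * B i j := by
      intro i j; simp only [hxdef, hydef]; ring
    have hS1 : ∑ i, ∑ j, (if i ∈ X then (1:ℝ) else 0) * B i j * (if j ∈ Y then (1:ℝ) else 0)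
        = m := by
      rw [hm]
      simp [ite_mul, mul_ite, Finset.sum_ite_mem]
    have hS2 : ∑ i, ∑ j, B i j * (if j ∈ Y then (1:ℝ) else 0) = Ny * (L / Nm) := by
      rw [Finset.sum_comm]
      have : ∀ j, ∑ i, B i j * (if j ∈ Y then (1:ℝ) else 0)
          = (if j ∈ Y then (1:ℝ) else 0) * (L / Nm) := by
        intro j
        rw [← Finset.sum_mul, hcol j]; ring
      simp only [this, ← Finset.sum_mul, Finset.sum_ite_mem, Finset.univ_inter,
        Finset.sum_const, nsmul_eq_mul, mul_one]
      rw [← hNy]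
    rw [hQdef]
    simp only [hpt, Finset.sum_add_distrib, Finset.sum_sub_distrib, ← Finset.mul_sum]
    rw [hS1, hS2]
    simp only [hrow, ← Finset.sum_mul, Finset.sum_ite_mem, Finset.univ_inter,
      Finset.sum_const, nsmul_eq_mul, mul_one, Finset.card_univ, Fintype.card_fin]
    rw [← hNx]
    field_simp
    ring
  -- symmetry of A
  have hAsym : Aᵀ = A := by
    rw [hA, Matrix.fromBlocks_transpose]
    simp
  have hcard : Fintype.card (Fin Nk ⊕ Fin Nm) = Nk + Nm := by simp
  -- quadratic form of A
  have hform : ∀ v : Fin Nk ⊕ Fin Nm → ℝ,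
      v ⬝ᵥ (A *ᵥ v) = ∑ i, ∑ j, B i j * (2 * (v (Sum.inl i) * v (Sum.inr j))) := by
    intro v
    have h1 : v ⬝ᵥ (A *ᵥ v)
        = (∑ i, v (Sum.inl i) * ∑ j, B i j * v (Sum.inr j))
          + ∑ j, v (Sum.inr j) * ∑ i, B i j * v (Sum.inl i) := by
      simp [hA, dotProduct, Matrix.mulVec, Fintype.sum_sum_type]
    have h2 : (∑ i, v (Sum.inl i) * ∑ j, B i j * v (Sum.inr j))
        = ∑ i, ∑ j, B i j * (v (Sum.inl i) * v (Sum.inr j)) := by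
      apply Finset.sum_congr rfl; intro i _
      rw [Finset.mul_sum]; apply Finset.sum_congr rfl; intro j _; ring
    have h3 : (∑ j, v (Sum.inr j) * ∑ i, B i j * v (Sum.inl i))
        = ∑ i, ∑ j, B i j * (v (Sum.inl i) * v (Sum.inr j)) := by
      have h3' : (∑ j, v (Sum.inr j) * ∑ i, B i j * v (Sum.inl i))
          = ∑ j, ∑ i, B i j * (v (Sum.inl i) * v (Sum.inr j)) := by
        apply Finset.sum_congr rfl; intro j _
        rw [Finset.mul_sum]; apply Finset.sum_congr rfl; intro i _; ring
      rw [h3', Finset.sum_comm]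
    rw [h1, h2, h3, ← Finset.sum_add_distrib]
    apply Finset.sum_congr rfl; intro i _
    rw [← Finset.sum_add_distrib]
    apply Finset.sum_congr rfl; intro j _
    ring
  have hvv : ∀ v : Fin Nk ⊕ Fin Nm → ℝ,
      v ⬝ᵥ v = (∑ i, v (Sum.inl i) * v (Sum.inl i)) + ∑ j, v (Sum.inr j) * v (Sum.inr j) := by
    intro v
    simp [dotProduct, Fintype.sum_sum_type]
  -- the key spectral inequality
  have hkey : ∀ w : Fin Nk ⊕ Fin Nm → ℝ, (∑ i, w (Sum.inl i)) = 0 →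
      (∑ j, w (Sum.inr j)) = 0 → w ⬝ᵥ (A *ᵥ w) ≤ lam1 * (w ⬝ᵥ w) := by
    intro w hw1 hw2
    by_cases hLz : L = 0
    · -- trivial case : A = 0
      have hB0 : ∀ i j, B i j = 0 := by
        intro i j
        have h := hrow i
        rw [hLz, zero_div] at h
        exact (Finset.sum_eq_zero_iff_of_nonneg (fun j _ => hBnn i j)).mp h j
          (Finset.mem_univ j)
      have hA0 : A = 0 := by
        rw [hA]
        ext a b
        cases a <;> cases b <;> simp [hB0]
      have hlamz : ∀ i, lam i = 0 := by
        intro i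
        have h := hz_eig i
        rw [hA0] at h
        have h2 := congrArg (fun v => z i ⬝ᵥ v) h
        simp only [Matrix.zero_mulVec, dotProduct_zero, dotProduct_smul,
          smul_eq_mul] at h2
        rw [hz_orth i i] at h2
        simpa using h2.symm
      rw [hA0]
      simp [hlam1, hlamz]
    · have hLpos : 0 < L := lt_of_le_of_ne hL0 (Ne.symm hLz)
      set d1 : ℝ := L / Nk with hd1
      set d2 : ℝ := L / Nm with hd2
      have hd1p : 0 < d1 := div_pos hLpos hNkR
      have hd2p : 0 < d2 := div_pos hLpos hNmR
      have hs1p : 0 < Real.sqrt d1 := Real.sqrt_pos.mpr hd1p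
      have hs2p : 0 < Real.sqrt d2 := Real.sqrt_pos.mpr hd2p
      set μ : ℝ := Real.sqrt d1 * Real.sqrt d2 with hμdef
      set p : Fin Nk ⊕ Fin Nm → ℝ :=
        Sum.elim (fun _ => Real.sqrt d1) (fun _ => Real.sqrt d2) with hpdef
      have hp : A *ᵥ p = μ • p := by
        funext a
        cases a with
        | inl i =>
          show (A *ᵥ p) (Sum.inl i) = μ * Real.sqrt d1
          rw [hA]
          have : (Matrix.fromBlocks 0 B Bᵀ 0 *ᵥ p) (Sum.inl i)
              = ∑ j, B i j * Real.sqrt d2 := by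
            simp [Matrix.mulVec, dotProduct, Fintype.sum_sum_type, hpdef]
          rw [this, ← Finset.sum_mul, hrow i]
          have : Real.sqrt d1 * Real.sqrt d1 = d1 := Real.mul_self_sqrt hd1p.le
          rw [hμdef]
          linear_combination (-Real.sqrt d2) * this
        | inr j =>
          show (A *ᵥ p) (Sum.inr j) = μ * Real.sqrt d2
          rw [hA]
          have : (Matrix.fromBlocks 0 B Bᵀ 0 *ᵥ p) (Sum.inr j)
              = ∑ i, B i j * Real.sqrt d1 := by
            simp [Matrix.mulVec, dotProduct, Fintype.sum_sum_type, hpdef,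
              Matrix.transpose_apply]
          rw [this, ← Finset.sum_mul, hcol j]
          have : Real.sqrt d2 * Real.sqrt d2 = d2 := Real.mul_self_sqrt hd2p.le
          rw [hμdef]
          linear_combination (-Real.sqrt d1) * this
      -- Rayleigh quotient bound
      have hray : ∀ v : Fin Nk ⊕ Fin Nm → ℝ, v ⬝ᵥ (A *ᵥ v) ≤ μ * (v ⬝ᵥ v) := by
        intro v
        set c1 : ℝ := Real.sqrt d2 / Real.sqrt d1 with hc1
        set c2 : ℝ := Real.sqrt d1 / Real.sqrt d2 with hc2
        have hc1p : 0 < c1 := div_pos hs2p hs1p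
        have hc2p : 0 < c2 := div_pos hs1p hs2p
        have hc12 : c1 * c2 = 1 := by
          rw [hc1, hc2]; field_simp
        have hc1d1 : c1 * d1 = μ := by
          rw [hc1, hμdef, div_mul_eq_mul_div, mul_div_assoc, Real.div_sqrt]; ring
        have hc2d2 : c2 * d2 = μ := by
          rw [hc2, hμdef, div_mul_eq_mul_div, mul_div_assoc, Real.div_sqrt]
        have hptw : ∀ i j, B i j * (2 * (v (Sum.inl i) * v (Sum.inr j)))
            ≤ B i j * (c1 * v (Sum.inl i) ^ 2 + c2 * v (Sum.inr j) ^ 2) := by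
          intro i j
          apply mul_le_mul_of_nonneg_left _ (hBnn i j)
          set a := v (Sum.inl i); set b := v (Sum.inr j)
          have hexp : c1 * a^2 + c2 * b^2 - 2 * (a * b) = c2 * (c1 * a - b)^2 := by
            linear_combination (2*a*b - c1*a^2) * hc12
          nlinarith [mul_nonneg hc2p.le (sq_nonneg (c1 * a - b))]
        calc v ⬝ᵥ (A *ᵥ v) = ∑ i, ∑ j, B i j * (2 * (v (Sum.inl i) * v (Sum.inr j))) :=
              hform v
          _ ≤ ∑ i, ∑ j, B i j * (c1 * v (Sum.inl i) ^ 2 + c2 * v (Sum.inr j) ^ 2) :=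
              Finset.sum_le_sum fun i _ => Finset.sum_le_sum fun j _ => hptw i j
          _ = μ * (v ⬝ᵥ v) := by
              have eA : ∑ i, ∑ j, B i j * (c1 * v (Sum.inl i) ^ 2)
                  = c1 * ∑ i, (∑ j, B i j) * v (Sum.inl i) ^ 2 := by
                rw [Finset.mul_sum]
                apply Finset.sum_congr rfl; intro i _
                rw [← Finset.sum_mul]; ring
              have eB : ∑ i, ∑ j, B i j * (c2 * v (Sum.inr j) ^ 2)
                  = c2 * ∑ j, (∑ i, B i j) * v (Sum.inr j) ^ 2 := by
                rw [Finset.sum_comm, Finset.mul_sum]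
                apply Finset.sum_congr rfl; intro j _
                rw [← Finset.sum_mul]; ring
              have e1 : ∑ i, ∑ j, B i j * (c1 * v (Sum.inl i) ^ 2 + c2 * v (Sum.inr j) ^ 2)
                  = (∑ i, ∑ j, B i j * (c1 * v (Sum.inl i) ^ 2))
                    + ∑ i, ∑ j, B i j * (c2 * v (Sum.inr j) ^ 2) := by
                simp only [mul_add, Finset.sum_add_distrib]
              rw [e1, eA, eB]
              simp only [hrow, hcol]
              rw [hvv v]
              have e2 : ∑ i, d1 * v (Sum.inl i) ^ 2
                  = d1 * ∑ i, v (Sum.inl i) * v (Sum.inl i) := by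
                rw [Finset.mul_sum]
                apply Finset.sum_congr rfl; intro i _; ring
              have e3 : ∑ j, d2 * v (Sum.inr j) ^ 2
                  = d2 * ∑ j, v (Sum.inr j) * v (Sum.inr j) := by
                rw [Finset.mul_sum]
                apply Finset.sum_congr rfl; intro j _; ring
              rw [e2, e3]
              linear_combination (∑ i, v (Sum.inl i) * v (Sum.inl i)) * hc1d1
                + (∑ j, v (Sum.inr j) * v (Sum.inr j)) * hc2d2
      have hμ0 : lam ⟨0, by omega⟩ ≤ μ := by
        have h1 : lam ⟨0, by omega⟩ = z ⟨0, by omega⟩ ⬝ᵥ (A *ᵥ z ⟨0, by omega⟩) := by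
          rw [hz_eig, dotProduct_smul, smul_eq_mul, hz_orth]
          simp
        have h2 := hray (z ⟨0, by omega⟩)
        have h3 : z ⟨0, by omega⟩ ⬝ᵥ z ⟨0, by omega⟩ = 1 := by rw [hz_orth]; simp
        rw [h3, mul_one] at h2
        rw [h1]; exact h2
      have hpne : p ⬝ᵥ p ≠ 0 := by
        have : p ⬝ᵥ p = Nk * d1 + Nm * d2 := by
          rw [hvv p]
          simp only [hpdef, Sum.elim_inl, Sum.elim_inr, Finset.sum_const,
            Finset.card_univ, Fintype.card_fin, nsmul_eq_mul]
          rw [Real.mul_self_sqrt hd1p.le, Real.mul_self_sqrt hd2p.le]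
        rw [this]
        positivity
      have hwp : p ⬝ᵥ w = 0 := by
        rw [dotProduct]
        rw [Fintype.sum_sum_type]
        simp only [hpdef, Sum.elim_inl, Sum.elim_inr]
        rw [← Finset.mul_sum, ← Finset.mul_sum, hw1, hw2]
        ring
      exact spectral_bound hcard hn A hAsym lam z hz_orth hz_eig hlam_mono p μ hp hμ0
        hpne w hwp
  -- main scaled inequality
  have hmain : ∀ s t : ℝ, 2 * (s * t) * Q ≤ lam1 * (s^2 * SX + t^2 * SY) := by
    intro s t
    set w : Fin Nk ⊕ Fin Nm → ℝ :=
      Sum.elim (fun i => s * x i) (fun j => t * y j) with hwdef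
    have hw1 : ∑ i, w (Sum.inl i) = 0 := by
      simp only [hwdef, Sum.elim_inl, ← Finset.mul_sum, hxsum, mul_zero]
    have hw2 : ∑ j, w (Sum.inr j) = 0 := by
      simp only [hwdef, Sum.elim_inr, ← Finset.mul_sum, hysum, mul_zero]
    have hlhs : w ⬝ᵥ (A *ᵥ w) = 2 * (s * t) * Q := by
      rw [hform w, hQdef]
      rw [Finset.mul_sum]
      apply Finset.sum_congr rfl; intro i _
      rw [Finset.mul_sum]
      apply Finset.sum_congr rfl; intro j _
      simp only [hwdef, Sum.elim_inl, Sum.elim_inr]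
      ring
    have hrhs : w ⬝ᵥ w = s^2 * SX + t^2 * SY := by
      rw [hvv w, hSXdef, hSYdef]
      simp only [hwdef, Sum.elim_inl, Sum.elim_inr, Finset.mul_sum]
      congr 1
      · apply Finset.sum_congr rfl; intro i _; ring
      · apply Finset.sum_congr rfl; intro j _; ring
    have := hkey w hw1 hw2
    rwa [hlhs, hrhs] at this
  -- conclude
  have hfin : Q ^ 2 ≤ lam1 ^ 2 * SX * SY := by
    by_cases hzero : SX * SY = 0
    · have hQ0 : Q = 0 := by
        rcases mul_eq_zero.mp hzero with h | h
        · have hx0 : ∀ i, x i = 0 := by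
            intro i
            have := (Finset.sum_eq_zero_iff_of_nonneg
              (fun i (_ : i ∈ Finset.univ) => sq_nonneg (x i))).mp h i (Finset.mem_univ i)
            exact pow_eq_zero_iff (n := 2) (by norm_num) |>.mp this
          rw [hQdef]
          apply Finset.sum_eq_zero; intro i _
          apply Finset.sum_eq_zero; intro j _
          rw [hx0 i]; ring
        · have hy0 : ∀ j, y j = 0 := by
            intro j
            have := (Finset.sum_eq_zero_iff_of_nonneg
              (fun j (_ : j ∈ Finset.univ) => sq_nonneg (y j))).mp h j (Finset.mem_univ j)
            exact pow_eq_zero_iff (n := 2) (by norm_num) |>.mp this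
          rw [hQdef]
          apply Finset.sum_eq_zero; intro i _
          apply Finset.sum_eq_zero; intro j _
          rw [hy0 j]; ring
      rw [hQ0]
      have : (0:ℝ) ≤ lam1 ^ 2 * SX * SY := by positivity
      simpa using this
    · have hpos : 0 < SX * SY :=
        lt_of_le_of_ne (mul_nonneg hSXnn hSYnn) (Ne.symm hzero)
      have h1 := hmain (Real.sqrt SY) (Real.sqrt SX)
      have h2 := hmain (Real.sqrt SY) (-Real.sqrt SX)
      rw [Real.sq_sqrt hSYnn, Real.sq_sqrt hSXnn] at h1
      rw [Real.sq_sqrt hSYnn, neg_pow, Real.sq_sqrt hSXnn] at h2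
      have hsq : (Real.sqrt SY * Real.sqrt SX) ^ 2 = SY * SX := by
        rw [mul_pow, Real.sq_sqrt hSYnn, Real.sq_sqrt hSXnn]
      set a : ℝ := Real.sqrt SY * Real.sqrt SX with hadef
      have h1' : 2 * a * Q ≤ lam1 * (SY * SX + SX * SY) := by
        simpa [hadef] using h1
      have h2' : -(2 * a * Q) ≤ lam1 * (SY * SX + SX * SY) := by
        have : 2 * (Real.sqrt SY * -Real.sqrt SX) * Q = -(2 * a * Q) := by
          rw [hadef]; ring
        rw [this] at h2
        convert h2 using 2
        ring
      have habs : (2 * a * Q) ^ 2 ≤ (lam1 * (SY * SX + SX * SY)) ^ 2 := by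
        apply sq_le_sq'
        · linarith
        · exact h1'
      have hexp : (2 * a * Q) ^ 2 = 4 * (SY * SX) * Q ^ 2 := by
        rw [mul_pow, mul_pow, hsq]; ring
      rw [hexp] at habs
      have hfinal : 4 * (SY * SX) * Q ^ 2 ≤ 4 * (SX * SY) * (lam1 ^ 2 * SX * SY) := by
        calc 4 * (SY * SX) * Q ^ 2 ≤ (lam1 * (SY * SX + SX * SY)) ^ 2 := habs
          _ = 4 * (SX * SY) * (lam1 ^ 2 * SX * SY) := by ring
      have h4pos : (0:ℝ) < 4 * (SX * SY) := by linarith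
      have := le_of_mul_le_mul_left (by
        calc (4 * (SX * SY)) * Q ^ 2 = 4 * (SY * SX) * Q ^ 2 := by ring
          _ ≤ 4 * (SX * SY) * (lam1 ^ 2 * SX * SY) := hfinal) h4pos
      exact this
  show (m - L / (Nk * Nm) * Nx * Ny) ^ 2 ≤
      lam1 ^ 2 * (Nx * (Nk - Nx) * (Ny * (Nm - Ny))) / (Nk * Nm)
  rw [← hQ]
  have hEq : lam1 ^ 2 * (Nx * (Nk - Nx) * (Ny * (Nm - Ny))) / ((Nk : ℝ) * Nm)
      = lam1 ^ 2 * SX * SY := by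
    rw [hSX, hSY]
    field_simp
  rw [hEq]
  exact hfin
end
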